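/- There exists a constant c > 0 such that for every n ∈ ℕ with n ≥ 1 and every vector of reals p_1, …, p_n with 0 < p_i < 1 for all i, one has T_LO(p_1,…,p_n) ≥ c·n². -/

import Mathlib

/-- `TLO n p = ∑_{i=1}^n 1/(2 p_i ∏_{j=1}^{i-1} (1 - p_j))`, the exact expected run time
of the (1+1) EA with bit flip probabilities `p 1, …, p n` on the `n`-bit LeadingOnes
function (Böttcher–Doerr–Neumann). -/
noncomputable def TLO (n : ℕ) (p : ℕ → ℝ) : ℝ :=
  ∑ i ∈ Finset.Icc 1 n, 1 / (2 * p i * ∏ j ∈ Finset.Ico 1 i, (1 - p j))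

/-- Lemma 3.1 (analytic core): `T_LO(p_1,…,p_n) = Ω(n²)` for any mutation probabilities. -/
theorem stmt0 :
    ∃ c : ℝ, 0 < c ∧ ∀ n : ℕ, 1 ≤ n → ∀ p : ℕ → ℝ,
      (∀ i ∈ Finset.Icc 1 n, 0 < p i ∧ p i < 1) →
      c * (n : ℝ) ^ 2 ≤ TLO n p := by
  refine ⟨1/2, by norm_num, ?_⟩
  intro n hn p hp
  set a : ℕ → ℝ := fun i => p i * ∏ j ∈ Finset.Ico 1 i, (1 - p j) with ha
  have hQpos : ∀ i, i ≤ n + 1 → 0 < ∏ j ∈ Finset.Ico 1 i, (1 - p j) := by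
    intro i hi
    apply Finset.prod_pos
    intro j hj
    have hj' := Finset.mem_Ico.mp hj
    have := (hp j (Finset.mem_Icc.mpr ⟨hj'.1, by omega⟩)).2
    linarith
  have hapos : ∀ i ∈ Finset.Icc 1 n, 0 < a i := by
    intro i hi
    have hi' := Finset.mem_Icc.mp hi
    exact mul_pos (hp i hi).1 (hQpos i (by omega))
  -- telescoping sum
  have hsum : ∑ i ∈ Finset.Icc 1 n, a i ≤ 1 := by
    have key : ∑ i ∈ Finset.Icc 1 n, a i
        = (∏ j ∈ Finset.Ico 1 1, (1 - p j)) - ∏ j ∈ Finset.Ico 1 (n + 1), (1 - p j) := by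
      rw [show Finset.Icc 1 n = Finset.Ico 1 (n + 1) by rw [Finset.Ico_add_one_right_eq_Icc]]
      rw [Finset.sum_Ico_eq_sum_range]
      have : ∀ k ∈ Finset.range (n + 1 - 1), a (1 + k)
          = (fun m => ∏ j ∈ Finset.Ico 1 (m + 1), (1 - p j)) k
            - (fun m => ∏ j ∈ Finset.Ico 1 (m + 1), (1 - p j)) (k + 1) := by
        intro k _
        simp only []
        rw [Finset.prod_Ico_succ_top (by omega : 1 ≤ k + 1)]
        have : (1 : ℕ) + k = k + 1 := by omega
        rw [this, ha]
        ring
      rw [Finset.sum_congr rfl this, Finset.sum_range_sub']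
      simp
    rw [key]
    have := hQpos (n + 1) le_rfl
    simp only [Finset.Ico_self, Finset.prod_empty]
    linarith
  -- Cauchy–Schwarz (Sedrakyan)
  have hCS : (↑(Finset.Icc 1 n).card : ℝ) ^ 2 / (∑ i ∈ Finset.Icc 1 n, a i)
      ≤ ∑ i ∈ Finset.Icc 1 n, 1 / a i := by
    have := Finset.sq_sum_div_le_sum_sq_div (Finset.Icc 1 n) (fun _ => (1 : ℝ)) hapos
    simpa using this
  have hcard : ((Finset.Icc 1 n).card : ℝ) = (n : ℝ) := by
    simp [Nat.card_Icc]
  have hsumpos : 0 < ∑ i ∈ Finset.Icc 1 n, a i := by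
    apply Finset.sum_pos hapos
    exact ⟨1, Finset.mem_Icc.mpr ⟨le_rfl, hn⟩⟩
  have hmain : (n : ℝ) ^ 2 ≤ ∑ i ∈ Finset.Icc 1 n, 1 / a i := by
    calc (n : ℝ) ^ 2 ≤ (n : ℝ) ^ 2 / (∑ i ∈ Finset.Icc 1 n, a i) := by
          rw [le_div_iff₀ hsumpos]
          nlinarith [sq_nonneg (n : ℝ)]
      _ ≤ _ := by rw [← hcard]; exact hCS
  have hTLO : TLO n p = ∑ i ∈ Finset.Icc 1 n, (1 / 2) * (1 / a i) := by
    unfold TLO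
    apply Finset.sum_congr rfl
    intro i _
    rw [ha]
    ring
  rw [hTLO, ← Finset.mul_sum]
  nlinarith [hmain]
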